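/- Let G be a chordal graph and k a positive integer. If G has a representation (T,β) with rad(T) ≤ k, then there exists a partition P of V(G) with |P| ≤ k+1 such that for every part V ∈ P, every connected component of the induced subgraph G[V] is a complete graph (i.e., G[V] is a disjoint union of complete graphs). (This is the corrected form of the paper's bound |P| ≤ k, accounting for the k+1 possible levels 0,1,…,k of subtrees in a tree of radius at most k.) -/

import Mathlib

open SimpleGraph

/-- A graph is chordal if it contains no hole, i.e. no induced cycle of length at least four. -/
def Chordal {V : Type} (G : SimpleGraph V) : Prop :=
  ∀ n : ℕ, 4 ≤ n → IsEmpty (SimpleGraph.cycleGraph n ↪g G)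

/-- `(T, β)` is a tree-decomposition of `G`. -/
structure IsTreeDecomp {V B : Type} (G : SimpleGraph V) (T : SimpleGraph B) (β : B → Set V) :
    Prop where
  isTree : T.IsTree
  exists_bag : ∀ v : V, ∃ t, v ∈ β t
  adj_bag : ∀ ⦃u v : V⦄, G.Adj u v → ∃ t, u ∈ β t ∧ v ∈ β t
  support_connected : ∀ v : V, (T.induce {t | v ∈ β t}).Connected

/-- The chordality of `G`. -/
noncomputable def chor {V : Type} [Fintype V] (G : SimpleGraph V) : ℕ :=
  sInf {k | 0 < k ∧ ∃ H : Fin k → SimpleGraph V, (∀ i, Chordal (H i)) ∧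
    ∀ u v : V, G.Adj u v ↔ ∀ i, (H i).Adj u v}

/-- The Cartesian (box) product of a family of graphs. -/
def boxProdPi {ι : Type} {B : ι → Type} (T : ∀ i, SimpleGraph (B i)) :
    SimpleGraph (∀ i, B i) where
  Adj x y := ∃ i, (T i).Adj (x i) (y i) ∧ ∀ j, j ≠ i → x j = y j
  symm := by
    refine ⟨?_⟩
    rintro x y ⟨i, h, hj⟩
    exact ⟨i, h.symm, fun j hji => (hj j hji).symm⟩
  loopless := by
    refine ⟨?_⟩
    rintro x ⟨i, h, -⟩
    exact (T i).loopless.irrefl _ h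

/-- The geodesic interval `I(u,v)` of a graph. -/
def geoInterval {V : Type} (G : SimpleGraph V) (u v : V) : Set V :=
  {x | G.dist u v = G.dist u x + G.dist x v}

/-- A set of vertices is (geodesically) convex. -/
def GeoConvex {V : Type} (G : SimpleGraph V) (S : Set V) : Prop :=
  ∀ u ∈ S, ∀ v ∈ S, geoInterval G u v ⊆ S

/-- A median graph. -/
def MedianGraph {V : Type} (M : SimpleGraph V) : Prop :=
  M.Connected ∧ ∀ u v w : V,
    ∃! x, x ∈ geoInterval M u v ∩ geoInterval M u w ∩ geoInterval M v w

/-- `φ` is an isometric embedding of `G` into `H`. -/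
def IsIsometricEmbedding {V W : Type} (G : SimpleGraph V) (H : SimpleGraph W)
    (φ : V → W) : Prop :=
  ∀ u v : V, H.dist (φ u) (φ v) = G.dist u v

/-- `M` has tree-dimension at most `k`. -/
def TreeDimLE {V : Type} (M : SimpleGraph V) (k : ℕ) : Prop :=
  ∃ (B : Fin k → Type) (_ : ∀ i, Fintype (B i)) (T : ∀ i, SimpleGraph (B i)),
    (∀ i, (T i).IsTree) ∧
    ∃ φ : V → (∀ i, B i), IsIsometricEmbedding M (boxProdPi T) φ

/-- `G` has a complete `k`-tree-median-decomposition. -/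
def HasCompleteTMD {V : Type} (G : SimpleGraph V) (k : ℕ) : Prop :=
  ∃ (X : Type) (_ : Fintype X) (M : SimpleGraph X) (γ : X → Set V),
    MedianGraph M ∧ TreeDimLE M k ∧
    (∀ v : V, ({x : X | v ∈ γ x}).Nonempty ∧ GeoConvex M {x : X | v ∈ γ x}) ∧
    (∀ ⦃u v : V⦄, G.Adj u v → ({x : X | u ∈ γ x} ∩ {x : X | v ∈ γ x}).Nonempty) ∧
    (∀ x : X, G.IsClique (γ x))

/-- The tree-median-dimension of `G`. -/
noncomputable def tmd {V : Type} [Fintype V] (G : SimpleGraph V) : ℕ :=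
  sInf {k | 0 < k ∧ HasCompleteTMD G k}

/-- `T` is a path graph. -/
def IsPathGraph {B : Type} (T : SimpleGraph B) : Prop :=
  ∃ n : ℕ, Nonempty (T ≃g SimpleGraph.pathGraph n)

/-- A graph is an interval graph if it can be represented by nonempty closed
intervals of the real line. -/
def IntervalGraph {V : Type} (G : SimpleGraph V) : Prop :=
  ∃ I : V → Set ℝ, (∀ v, ∃ a b : ℝ, a ≤ b ∧ I v = Set.Icc a b) ∧
    ∀ u v : V, u ≠ v → (G.Adj u v ↔ (I u ∩ I v).Nonempty)

/-- `(T, β)` is a representation of the chordal graph `H`. -/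
structure IsRepresentation {V B : Type} (H : SimpleGraph V) (T : SimpleGraph B)
    (β : B → Set V) : Prop where
  isTree : T.IsTree
  support_connected : ∀ v : V, (T.induce {t | v ∈ β t}).Connected
  adj_iff : ∀ u v : V, u ≠ v →
    (H.Adj u v ↔ ({t : B | u ∈ β t} ∩ {t : B | v ∈ β t}).Nonempty)

/-- `G` has path-width at most `k`. -/
def PathwidthLE {V : Type} (G : SimpleGraph V) (k : ℕ) : Prop :=
  ∃ (B : Type) (_ : Fintype B) (P : SimpleGraph B) (β : B → Set V),
    IsPathGraph P ∧ IsTreeDecomp G P β ∧ ∀ t : B, (β t).ncard ≤ k + 1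

/-- The radius of `T` is at most `k`. -/
def RadiusLE {B : Type} (T : SimpleGraph B) (k : ℕ) : Prop :=
  ∃ r : B, ∀ t : B, T.dist r t ≤ k

/-- The lexicographic product of two graphs. -/
def lexProd {V W : Type} (G : SimpleGraph V) (H : SimpleGraph W) :
    SimpleGraph (V × W) where
  Adj x y := G.Adj x.1 y.1 ∨ (x.1 = y.1 ∧ H.Adj x.2 y.2)
  symm := by
    refine ⟨?_⟩
    rintro x y (h | ⟨h1, h2⟩)
    · exact Or.inl h.symm
    · exact Or.inr ⟨h1.symm, h2.symm⟩
  loopless := by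
    refine ⟨?_⟩
    rintro x (h | ⟨-, h⟩) <;> exact SimpleGraph.irrefl _ h

open SimpleGraph Walk

section TreeAux
variable {B : Type} [DecidableEq B] {T : SimpleGraph B}

/-- The unique path between two vertices of a tree. -/
noncomputable def tp (hT : T.IsTree) (r t : B) : T.Walk r t :=
  (hT.existsUnique_path r t).exists.choose

lemma tp_isPath (hT : T.IsTree) (r t : B) : (tp hT r t).IsPath :=
  (hT.existsUnique_path r t).exists.choose_spec

lemma tp_unique (hT : T.IsTree) {r t : B} (p : T.Walk r t) (hp : p.IsPath) :
    p = tp hT r t :=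
  Subtype.ext_iff.mp
    (hT.IsAcyclic.path_unique (⟨p, hp⟩ : T.Path r t) ⟨tp hT r t, tp_isPath hT r t⟩)

lemma tp_length (hT : T.IsTree) (r t : B) : (tp hT r t).length = T.dist r t := by
  obtain ⟨w, hw⟩ := (hT.isConnected.preconnected r t).exists_walk_length_eq_dist
  have hb : w.bypass = tp hT r t := tp_unique hT _ w.bypass_isPath
  have h1 : T.dist r t ≤ w.bypass.length := SimpleGraph.dist_le _
  have h2 : w.bypass.length ≤ w.length := Walk.length_bypass_le w
  rw [hb] at h1 h2
  omega

lemma isPath_concat' {r s t : B} {p : T.Walk r s} (hp : p.IsPath) (h : T.Adj s t)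
    (ht : t ∉ p.support) : (p.concat h).IsPath := by
  rw [← isPath_reverse_iff, reverse_concat]
  exact hp.reverse.cons (by simpa [Walk.support_reverse] using ht)

lemma mem_support_dist (hT : T.IsTree) {r s t : B} (ht : t ∈ (tp hT r s).support) :
    T.dist r t + ((tp hT r s).dropUntil t ht).length = T.dist r s := by
  have hq : ((tp hT r s).takeUntil t ht).IsPath := (tp_isPath hT r s).takeUntil ht
  have he : (tp hT r s).takeUntil t ht = tp hT r t := tp_unique hT _ hq
  have hl := congrArg Walk.length ((tp hT r s).take_spec ht)
  rw [Walk.length_append, he, tp_length, tp_length] at hl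
  exact hl

/-- Adjacent vertices of a tree are at distances differing by exactly one from any root. -/
lemma adj_dist (hT : T.IsTree) (r : B) {s t : B} (h : T.Adj s t) :
    T.dist r t = T.dist r s + 1 ∨ T.dist r s = T.dist r t + 1 := by
  have h1 : T.dist r t ≤ T.dist r s + 1 := by
    have := SimpleGraph.dist_le ((tp hT r s).concat h)
    rwa [Walk.length_concat, tp_length] at this
  have h2 : T.dist r s ≤ T.dist r t + 1 := by
    have := SimpleGraph.dist_le ((tp hT r t).concat h.symm)
    rwa [Walk.length_concat, tp_length] at this
  have hne : T.dist r s ≠ T.dist r t := by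
    intro hd
    by_cases ht : t ∈ (tp hT r s).support
    · have := mem_support_dist hT ht
      have hz : ((tp hT r s).dropUntil t ht).length = 0 := by omega
      exact h.ne' (Walk.eq_of_length_eq_zero hz)
    · have hpath := isPath_concat' (tp_isPath hT r s) h ht
      have := congrArg Walk.length (tp_unique hT _ hpath)
      rw [Walk.length_concat, tp_length, tp_length] at this
      omega
  omega

/-- If `t` is one step farther than `s`, the path to `t` extends the path to `s`. -/
lemma tp_prefix (hT : T.IsTree) (r : B) {s t : B} (h : T.Adj s t)
    (hd : T.dist r t = T.dist r s + 1) {i : ℕ} (hi : i ≤ T.dist r s) :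
    (tp hT r t).getVert i = (tp hT r s).getVert i := by
  have ht : t ∉ (tp hT r s).support := by
    intro ht
    have := mem_support_dist hT ht
    omega
  have hpath := isPath_concat' (tp_isPath hT r s) h ht
  have he : (tp hT r s).concat h = tp hT r t := tp_unique hT _ hpath
  rw [← he, Walk.concat_eq_append, Walk.getVert_append]
  split
  · rfl
  · rename_i hlt
    have hlen : (tp hT r s).length = T.dist r s := tp_length hT r s
    have : i = (tp hT r s).length := by omega
    subst this
    simp [Walk.getVert_length, Walk.getVert_zero]

lemma tp_getVert_eq (hT : T.IsTree) (r : B) {s t : B} (h : T.Adj s t) {i : ℕ}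
    (hs : i ≤ T.dist r s) (ht : i ≤ T.dist r t) :
    (tp hT r s).getVert i = (tp hT r t).getVert i := by
  rcases adj_dist hT r h with hd | hd
  · exact (tp_prefix hT r h hd hs).symm
  · exact tp_prefix hT r h.symm hd ht

end TreeAux

/-- If a chordal graph `G` has a representation tree of radius at most `k`,
then `V(G)` can be partitioned into at most `k + 1` parts each inducing a disjoint union of
complete graphs (every connected component of each induced part is complete). -/
theorem stmt_18 {V : Type} [Fintype V] (G : SimpleGraph V) (hG : Chordal G)
    (k : ℕ) (hk : 0 < k) (B : Type) [Fintype B] (T : SimpleGraph B)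
    (β : B → Set V) (hrep : IsRepresentation G T β) (hrad : RadiusLE T k) :
    ∃ P : Finset (Set V), (∀ v : V, ∃! S, S ∈ P ∧ v ∈ S) ∧ P.card ≤ k + 1 ∧
      ∀ S ∈ P, ∀ u v : S, (G.induce S).Reachable u v → u ≠ v →
        (G.induce S).Adj u v := by
  classical
  obtain ⟨r, hr⟩ := hrad
  have hT := hrep.isTree
  set L : V → ℕ := fun v => sInf {n | ∃ t, v ∈ β t ∧ T.dist r t = n} with hLdef
  have hLmem : ∀ v : V, ∃ t, v ∈ β t ∧ T.dist r t = L v := by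
    intro v
    obtain ⟨t0⟩ : Nonempty {t : B | v ∈ β t} := (hrep.support_connected v).nonempty
    have hne : {n | ∃ t, v ∈ β t ∧ T.dist r t = n}.Nonempty := ⟨T.dist r ↑t0, t0, t0.2, rfl⟩
    exact Nat.sInf_mem hne
  have hLle : ∀ v t, v ∈ β t → L v ≤ T.dist r t := fun v t h => Nat.sInf_le ⟨t, h, rfl⟩
  choose top htop hdtop using hLmem
  have claim : ∀ (x : V) (t : B), x ∈ β t → (tp hT r t).getVert (L x) = top x := by
    intro x t ht
    obtain ⟨w⟩ := (hrep.support_connected x).preconnected ⟨top x, htop x⟩ ⟨t, ht⟩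
    have key : ∀ (a b : {t : B | x ∈ β t}) (w : (T.induce {t : B | x ∈ β t}).Walk a b),
        (tp hT r ↑a).getVert (L x) = (tp hT r ↑b).getVert (L x) := by
      intro a b w
      induction w with
      | nil => rfl
      | cons h p ih =>
        rename_i c d e
        have hadj : T.Adj ↑c ↑d := h
        exact (tp_getVert_eq hT r hadj (hLle x _ c.2) (hLle x _ d.2)).trans ih
    have hbase : (tp hT r (top x)).getVert (L x) = top x := by
      have hl := tp_length hT r (top x)
      rw [hdtop x] at hl
      rw [← hl, Walk.getVert_length]
    rw [← key ⟨top x, htop x⟩ ⟨t, ht⟩ w]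
    exact hbase
  have keyadj : ∀ u v : V, G.Adj u v → L u = L v → top u = top v := by
    intro u v huv hLuv
    obtain ⟨t, ht⟩ := (hrep.adj_iff u v huv.ne).mp huv
    have h1 := claim u t ht.1
    have h2 := claim v t ht.2
    rw [hLuv] at h1
    rw [← h1, h2]
  refine ⟨(Finset.range (k+1)).image (fun i => {v : V | L v = i}), ?_, ?_, ?_⟩
  · intro v
    refine ⟨{x : V | L x = L v}, ⟨?_, rfl⟩, ?_⟩
    · refine Finset.mem_image.mpr ⟨L v, Finset.mem_range.mpr ?_, rfl⟩
      have h1 : L v ≤ k := by rw [← hdtop v]; exact hr (top v)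
      omega
    · rintro S ⟨hS, hvS⟩
      obtain ⟨j, -, rfl⟩ := Finset.mem_image.mp hS
      have hj : L v = j := hvS
      rw [hj]
  · exact Finset.card_image_le.trans (by simp)
  · rintro S hS u v hreach hne
    obtain ⟨j, -, rfl⟩ := Finset.mem_image.mp hS
    obtain ⟨w⟩ := hreach
    have hconst : ∀ (a b : {x : V | L x = j})
        (w : (G.induce {x : V | L x = j}).Walk a b), top ↑a = top ↑b := by
      intro a b w
      induction w with
      | nil => rfl
      | cons h p ih =>
        rename_i c d e
        have hadjG : G.Adj ↑c ↑d := h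
        exact (keyadj _ _ hadjG (c.2.trans d.2.symm)).trans ih
    have hc := hconst u v w
    have hune : (↑u : V) ≠ ↑v := fun h => hne (Subtype.ext h)
    have hu : (↑u : V) ∈ β (top ↑v) := hc ▸ htop ↑u
    exact (hrep.adj_iff ↑u ↑v hune).mpr ⟨top ↑v, hu, htop ↑v⟩
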